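/- Let T be a triangulated category and let C1, C2 be strictly full triangulated subcategories of T such that Hom_T(X, Y) = 0 for every object X of C2 and every object Y of C1. If the inclusion functor of C1 into T admits a left adjoint and C2 consists exactly of the objects D of T with Hom_T(D, Y) = 0 for all objects Y of C1, then for every object D of T there exists a distinguished triangle B ⟶ D ⟶ A ⟶ B⟦1⟧ with B in C2 and A in C1. -/

import Mathlib

open CategoryTheory Category Limits Pretriangulated

universe v u

variable (T : Type u) [Category.{v} T] [HasZeroObject T] [HasShift T ℤ]
  [Preadditive T] [∀ n : ℤ, (shiftFunctor T n).Additive] [Pretriangulated T]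

/-- A strictly full triangulated subcategory of `T`, encoded as a predicate on objects:
it contains the zero objects, is closed under isomorphisms, is closed under shifts in
both directions, and is closed under extensions. -/
structure IsTriangulatedSubcategory (P : T → Prop) : Prop where
  zero : ∀ X : T, IsZero X → P X
  isoClosed : ∀ ⦃X Y : T⦄, (X ≅ Y) → P X → P Y
  shift : ∀ (X : T) (n : ℤ), P X → P (X⟦n⟧)
  ext₂ : ∀ Tr : Triangle T, (Tr ∈ distTriang T) → P Tr.obj₁ → P Tr.obj₃ → P Tr.obj₂

/-- If `C₁`, `C₂` are strictly full triangulated subcategories with no nonzero morphisms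
from `C₂` to `C₁`, the inclusion functor of `C₁` into `T` admits a left adjoint and `C₂`
is the left orthogonal of `C₁`, then every object of `T` fits into a distinguished
triangle `B ⟶ D ⟶ A ⟶ B⟦1⟧` with `B ∈ C₂` and `A ∈ C₁`. -/
theorem left_adjoint_gives_decomposition_triangles [IsTriangulated T]
    (C1 C2 : T → Prop)
    (hC1 : IsTriangulatedSubcategory T C1) (hC2 : IsTriangulatedSubcategory T C2)
    (hHom : ∀ (X Y : T), C2 X → C1 Y → ∀ f : X ⟶ Y, f = 0)
    (hadj : (ObjectProperty.ι C1).IsRightAdjoint)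
    (hperp : ∀ D : T, C2 D ↔ ∀ Y : T, C1 Y → ∀ f : D ⟶ Y, f = 0) :
    ∀ D : T, ∃ (B A : T) (f : B ⟶ D) (g : D ⟶ A) (h : A ⟶ B⟦(1 : ℤ)⟧),
      C2 B ∧ C1 A ∧ (Triangle.mk f g h ∈ distTriang T) := by
  intro D
  have : (ObjectProperty.ι C1).IsRightAdjoint := hadj
  let ι := ObjectProperty.ι C1
  let adj : ι.leftAdjoint ⊣ ι := Adjunction.ofIsRightAdjoint ι
  let A : T := ι.obj (ι.leftAdjoint.obj D)
  have hA : C1 A := (ι.leftAdjoint.obj D).property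
  let g : D ⟶ A := adj.unit.app D
  -- the universal property of the unit, for targets in C1
  have key : ∀ (W : T), C1 W → ∀ v : D ⟶ W, ∃! w : A ⟶ W, v = g ≫ w := by
    intro W hW v
    refine ⟨ι.map ((adj.homEquiv D ⟨W, hW⟩).symm v), ?_, ?_⟩
    · have h1 := (adj.homEquiv D ⟨W, hW⟩).apply_symm_apply v
      rw [Adjunction.homEquiv_unit] at h1
      exact h1.symm
    · intro w hw
      let w' := ι.preimage (X := ι.leftAdjoint.obj D) (Y := ⟨W, hW⟩) w
      have hfull : w = ι.map w' :=
        (ι.map_preimage (X := ι.leftAdjoint.obj D) (Y := ⟨W, hW⟩) w).symm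
      have h2 : adj.homEquiv D ⟨W, hW⟩ w' = v := by
        rw [Adjunction.homEquiv_unit, ← hfull, hw]
      rw [hfull, ← (adj.homEquiv D ⟨W, hW⟩).symm_apply_apply w', h2]
  -- the same property after shifting
  have keyShift : ∀ (n : ℤ) (W : T), C1 W → ∀ v : D⟦n⟧ ⟶ W,
      ∃ w : A⟦n⟧ ⟶ W, v = g⟦n⟧' ≫ w := by
    intro n W hW v
    let sadj := (shiftEquiv T n).toAdjunction
    obtain ⟨w', hw', -⟩ := key (W⟦(-n)⟧) (hC1.shift W (-n) hW) (sadj.homEquiv D W v)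
    refine ⟨(sadj.homEquiv A W).symm w', (sadj.homEquiv D W).injective ?_⟩
    erw [Adjunction.homEquiv_naturality_left, (sadj.homEquiv A W).apply_symm_apply]
    exact hw'
  obtain ⟨Z, h₂, h₃, hT⟩ := distinguished_cocone_triangle g
  -- every map from Z to an object of C1 vanishes
  have hZ : ∀ (W : T), C1 W → ∀ u : Z ⟶ W, u = 0 := by
    intro W hW u
    have h2u : h₂ ≫ u = 0 := by
      obtain ⟨w, hw, huniq⟩ := key W hW 0
      have e1 := huniq (h₂ ≫ u) (by
        show (0 : D ⟶ W) = g ≫ h₂ ≫ u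
        have h0 := comp_distTriang_mor_zero₁₂ _ hT
        change g ≫ h₂ = 0 at h0
        rw [← assoc, h0, zero_comp])
      have e2 := huniq 0 (by simp)
      exact e1.trans e2.symm
    obtain ⟨v, hv⟩ := Triangle.yoneda_exact₃ _ hT u h2u
    obtain ⟨w, hw⟩ := keyShift 1 W hW v
    rw [hv, hw]
    erw [← assoc]
    have h0 := comp_distTriang_mor_zero₃₁ _ hT
    change h₃ ≫ (shiftFunctor T 1).map g = 0 at h0
    rw [show (Triangle.mk g h₂ h₃).mor₃ = h₃ from rfl]
    erw [h0, zero_comp]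
    rfl
  -- hence Z⟦-1⟧ lies in C2
  have hB : C2 (Z⟦(-1 : ℤ)⟧) := by
    rw [hperp]
    intro Y hY f
    let sadj := (shiftEquiv T (-1 : ℤ)).toAdjunction
    have h1 : sadj.homEquiv Z Y f = 0 := hZ _ (hC1.shift Y _ hY) _
    have h2 : f = (sadj.homEquiv Z Y).symm 0 := by
      rw [← h1]
      exact ((sadj.homEquiv Z Y).symm_apply_apply f).symm
    rw [h2, Adjunction.homEquiv_counit]
    simp
    rfl
  exact ⟨Z⟦(-1 : ℤ)⟧, A, (Triangle.mk g h₂ h₃).invRotate.mor₁, g,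
    (Triangle.mk g h₂ h₃).invRotate.mor₃, hB, hA, inv_rot_of_distTriang _ hT⟩
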